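/- Let G be a finite abelian group and C ⊆ G. Then every eigenvalue of Cay(G,C) is an integer if and only if C is power-closed (equivalently, C is closed under x ↦ x^t for all t coprime to the exponent of G). -/

import Mathlib

/-- A subset `C` of a group is power-closed. -/
def IsPowerClosed {G : Type*} [Group G] (C : Finset G) : Prop :=
  ∀ x ∈ C, ∀ y : G, y ∈ Subgroup.zpowers x → Subgroup.zpowers y = Subgroup.zpowers x → y ∈ C

/-- The adjacency matrix of the Cayley digraph `Cay(G, C)`. -/
def cayleyAdj {G : Type*} [Group G] [Fintype G] [DecidableEq G] (C : Finset G) :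
    Matrix G G ℂ := fun g h => if g * h⁻¹ ∈ C then 1 else 0

open Finset Polynomial

section Chars
variable (G : Type*) [CommGroup G] [Fintype G]

private noncomputable def charEquiv : (G →* ℂ) ≃ G := by
  have : NeZero ((Monoid.exponent G : ℂ)) :=
    ⟨Nat.cast_ne_zero.mpr Monoid.exponent_ne_zero_of_finite⟩
  have e1 : (G →* ℂ) ≃ (G →* ℂˣ) :=
    { toFun := MonoidHom.toHomUnits
      invFun := fun f => (Units.coeHom ℂ).comp f
      left_inv := fun f => by ext g; simp
      right_inv := fun f => by ext g; simp }
  exact e1.trans (CommGroup.monoidHom_mulEquiv_of_hasEnoughRootsOfUnity G ℂ).some.toEquiv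

private noncomputable instance fintypeChar : Fintype (G →* ℂ) :=
  Fintype.ofEquiv G (charEquiv G).symm

private noncomputable def charBasis : Module.Basis (G →* ℂ) ℂ (G → ℂ) :=
  basisOfLinearIndependentOfCardEqFinrank (linearIndependent_monoidHom G ℂ)
    (by rw [Fintype.card_congr (charEquiv G), Module.finrank_pi])

private lemma charBasis_apply (χ : G →* ℂ) : charBasis G χ = ⇑χ := by
  rw [charBasis, coe_basisOfLinearIndependentOfCardEqFinrank]

end Chars

section Cay
variable {G : Type*} [CommGroup G] [Fintype G] [DecidableEq G]
set_option linter.unusedSectionVars false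

private lemma cayley_mulVec (C : Finset G) (χ : G →* ℂ) :
    (cayleyAdj C).mulVec (fun h => χ h⁻¹) = (∑ c ∈ C, χ c) • fun h => χ h⁻¹ := by
  funext g
  show ∑ h, (if g * h⁻¹ ∈ C then (1:ℂ) else 0) * χ h⁻¹ = (∑ c ∈ C, χ c) * χ g⁻¹
  rw [Fintype.sum_equiv ((Equiv.inv G).trans (Equiv.mulLeft g))
      _ (fun c => if c ∈ C then χ g⁻¹ * χ c else 0) ?_]
  · rw [Finset.sum_ite_mem, Finset.univ_inter, ← Finset.mul_sum, mul_comm]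
  · intro h
    simp only [Equiv.trans_apply, Equiv.inv_apply, Equiv.coe_mulLeft]
    by_cases hmem : g * h⁻¹ ∈ C
    · rw [if_pos hmem, if_pos hmem, one_mul, ← map_mul]
      congr 1
      group
    · rw [if_neg hmem, if_neg hmem, zero_mul]

private lemma charSum_mem_spectrum (C : Finset G) (χ : G →* ℂ) :
    (∑ c ∈ C, χ c) ∈ spectrum ℂ (cayleyAdj C) := by
  rw [spectrum.mem_iff, Matrix.isUnit_iff_isUnit_det, isUnit_iff_ne_zero, not_not,
    ← Matrix.exists_mulVec_eq_zero_iff]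
  refine ⟨fun h => χ h⁻¹, ?_, ?_⟩
  · intro h0
    have := congrFun h0 1
    simp at this
  · rw [Matrix.sub_mulVec, cayley_mulVec, Algebra.algebraMap_eq_smul_one,
      Matrix.smul_mulVec, Matrix.one_mulVec, sub_self]

private lemma cayley_mulVec' (C : Finset G) (χ : G →* ℂ) :
    (cayleyAdj C).mulVec ⇑χ = (∑ c ∈ C, χ c⁻¹) • ⇑χ := by
  have h1 : (fun h : G => (χ.comp invMonoidHom) h⁻¹) = ⇑χ := by
    funext h; simp
  have h2 : ∀ c : G, (χ.comp invMonoidHom) c = χ c⁻¹ := fun c => rfl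
  have := cayley_mulVec C (χ.comp invMonoidHom)
  rw [h1] at this
  simpa [h2] using this

private lemma spectrum_sub (C : Finset G) {μ : ℂ} (hμ : μ ∈ spectrum ℂ (cayleyAdj C)) :
    ∃ χ : G →* ℂ, μ = ∑ c ∈ C, χ c := by
  classical
  rw [spectrum.mem_iff, Matrix.isUnit_iff_isUnit_det, isUnit_iff_ne_zero, not_not,
    ← Matrix.exists_mulVec_eq_zero_iff] at hμ
  obtain ⟨v, hv0, hv⟩ := hμ
  have hv' : (cayleyAdj C).mulVec v = μ • v := by
    rw [Matrix.sub_mulVec, Algebra.algebraMap_eq_smul_one, Matrix.smul_mulVec,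
      Matrix.one_mulVec, sub_eq_zero] at hv
    exact hv.symm
  set b := charBasis G with hb
  set c := b.repr v with hcdef
  have hvs : v = ∑ χ : G →* ℂ, c χ • b χ := (b.sum_repr v).symm
  have key : ∀ χ : G →* ℂ, (cayleyAdj C).mulVec (b χ) = (∑ d ∈ C, χ d⁻¹) • b χ := by
    intro χ
    rw [hb, charBasis_apply]
    exact cayley_mulVec' C χ
  have e1 : ∑ χ : G →* ℂ, (c χ * (∑ d ∈ C, χ d⁻¹)) • b χ
      = ∑ χ : G →* ℂ, (μ * c χ) • b χ := by
    calc ∑ χ : G →* ℂ, (c χ * (∑ d ∈ C, χ d⁻¹)) • b χ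
        = ∑ χ : G →* ℂ, c χ • ((cayleyAdj C).mulVec (b χ)) := by
          refine Finset.sum_congr rfl fun χ _ => ?_
          rw [key, smul_smul]
      _ = (cayleyAdj C).mulVec v := by
          rw [hvs]
          rw [show (cayleyAdj C).mulVec (∑ χ : G →* ℂ, c χ • b χ)
              = ∑ χ : G →* ℂ, (cayleyAdj C).mulVec (c χ • b χ) from
            map_sum (cayleyAdj C).mulVecLin _ _]
          refine Finset.sum_congr rfl fun χ _ => ?_
          rw [Matrix.mulVec_smul]
      _ = μ • v := hv'
      _ = ∑ χ : G →* ℂ, (μ * c χ) • b χ := by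
          rw [hvs, Finset.smul_sum]
          refine Finset.sum_congr rfl fun χ _ => ?_
          rw [smul_smul]
  have e2 : (fun χ : G →* ℂ => c χ * (∑ d ∈ C, χ d⁻¹)) = fun χ => μ * c χ := by
    calc (fun χ : G →* ℂ => c χ * (∑ d ∈ C, χ d⁻¹))
        = ⇑(b.repr (∑ χ : G →* ℂ, (c χ * (∑ d ∈ C, χ d⁻¹)) • b χ)) :=
          (b.repr_sum_self _).symm
      _ = ⇑(b.repr (∑ χ : G →* ℂ, (μ * c χ) • b χ)) := by rw [e1]
      _ = fun χ => μ * c χ := b.repr_sum_self _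
  have hc0 : ∃ χ : G →* ℂ, c χ ≠ 0 := by
    by_contra h
    push_neg at h
    apply hv0
    rw [hvs]
    simp [h]
  obtain ⟨χ₀, hχ₀⟩ := hc0
  refine ⟨χ₀.comp invMonoidHom, ?_⟩
  have h := congrFun e2 χ₀
  have hμeq : (∑ d ∈ C, χ₀ d⁻¹) = μ :=
    mul_left_cancel₀ hχ₀ (h.trans (mul_comm μ (c χ₀)))
  rw [← hμeq]
  rfl

/-- Reduce an integer exponent to a natural one mod `n`. -/
private lemma exists_nat_pow_eq {H : Type*} [Group H] (x : H) {n : ℕ} (hn : n ≠ 0)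
    (hxn : x ^ n = 1) (t : ℤ) :
    ∃ t' : ℕ, x ^ t = x ^ t' ∧ Int.gcd (t' : ℤ) (n : ℤ) = Int.gcd t (n : ℤ) := by
  have hn' : (n : ℤ) ≠ 0 := Int.natCast_ne_zero.mpr hn
  refine ⟨(t % (n : ℤ)).toNat, ?_, ?_⟩
  · have h0 : (0 : ℤ) ≤ t % (n : ℤ) := Int.emod_nonneg t hn'
    have hto : ((t % (n : ℤ)).toNat : ℤ) = t % (n : ℤ) := Int.toNat_of_nonneg h0
    rw [← zpow_natCast, hto]
    conv_lhs => rw [← Int.emod_add_mul_ediv t (n : ℤ)]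
    rw [zpow_add, zpow_mul, zpow_natCast, hxn, one_zpow, mul_one]
  · have h0 : (0 : ℤ) ≤ t % (n : ℤ) := Int.emod_nonneg t hn'
    rw [Int.toNat_of_nonneg h0]
    apply Nat.dvd_antisymm
    · apply Nat.dvd_gcd
      · have h1 : ((Int.gcd (t % (n:ℤ)) (n:ℤ) : ℤ)) ∣ t := by
          have := Int.emod_add_mul_ediv t (n : ℤ)
          calc ((Int.gcd (t % (n:ℤ)) (n:ℤ) : ℤ)) ∣ t % (n:ℤ) + (n:ℤ) * (t / (n:ℤ)) :=
              dvd_add (Int.gcd_dvd_left _ _) (Dvd.dvd.mul_right (Int.gcd_dvd_right _ _) _)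
            _ = t := this
        exact Int.natCast_dvd_natCast.mp (by simpa [Int.dvd_natAbs] using h1)
      · exact Int.natCast_dvd_natCast.mp (by simpa [Int.dvd_natAbs] using
          (Int.gcd_dvd_right _ _ : ((Int.gcd (t % (n:ℤ)) (n:ℤ) : ℤ)) ∣ (n:ℤ)))
    · apply Nat.dvd_gcd
      · have h1 : ((Int.gcd t (n:ℤ) : ℤ)) ∣ t % (n:ℤ) := by
          rw [Int.emod_def]
          exact dvd_sub (Int.gcd_dvd_left _ _) (Dvd.dvd.mul_right (Int.gcd_dvd_right _ _) _)
        exact Int.natCast_dvd_natCast.mp (by simpa [Int.dvd_natAbs] using h1)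
      · exact Int.natCast_dvd_natCast.mp (by simpa [Int.dvd_natAbs] using
          (Int.gcd_dvd_right _ _ : ((Int.gcd t (n:ℤ) : ℤ)) ∣ (n:ℤ)))

private lemma pow_coprime_injective {t : ℕ} (ht : Nat.Coprime t (Monoid.exponent G)) :
    Function.Injective (fun g : G => g ^ t) := by
  have : Function.Injective (powMonoidHom t : G →* G) := by
    rw [injective_iff_map_eq_one]
    intro g hg
    have h3 : orderOf g ∣ 1 := ht ▸ Nat.dvd_gcd (orderOf_dvd_of_pow_eq_one hg)
      (Monoid.order_dvd_exponent g)
    exact orderOf_eq_one_iff.mp (Nat.eq_one_of_dvd_one h3 ▸ rfl)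
  exact this

private lemma charSum_int_of_image_eq (C : Finset G)
    (hC : ∀ t : ℕ, Nat.Coprime t (Monoid.exponent G) → C.image (· ^ t) = C)
    (χ : G →* ℂ) : ∃ k : ℤ, (∑ c ∈ C, χ c) = (k : ℂ) := by
  classical
  set n := Monoid.exponent G with hndef
  have hn : n ≠ 0 := Monoid.exponent_ne_zero_of_finite
  haveI : NeZero n := ⟨hn⟩
  have hnpos : 0 < n := Nat.pos_of_ne_zero hn
  set ω : ℂ := Complex.exp (2 * Real.pi * Complex.I / n) with hωdef
  have hω : IsPrimitiveRoot ω n := Complex.isPrimitiveRoot_exp n hn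
  have hpow : ∀ c : G, (χ c) ^ n = 1 := fun c => by
    rw [← map_pow, hndef, Monoid.pow_exponent_eq_one, map_one]
  choose a ha1 ha2 using fun c => hω.eq_pow_of_pow_eq_one (hpow c)
  have hsum : ∀ t : ℕ, Nat.Coprime t n → ∑ c ∈ C, (χ c) ^ t = ∑ c ∈ C, χ c := by
    intro t ht
    have h1 : ∑ c ∈ C, (χ c) ^ t = ∑ c ∈ C, χ (c ^ t) := by simp [map_pow]
    have h2 : ∑ c ∈ C, χ (c ^ t) = ∑ d ∈ C.image (· ^ t), χ d := by
      rw [Finset.sum_image]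
      intro x _ y _ hxy
      exact pow_coprime_injective ht hxy
    rw [h1, h2, hC t ht]
  set f : ℚ[X] := ∑ c ∈ C, X ^ (a c) with hfdef
  have heval : ∀ t : ℕ, Nat.Coprime t n → Polynomial.aeval (ω ^ t) f = ∑ c ∈ C, χ c := by
    intro t ht
    rw [hfdef]
    rw [map_sum]
    have : ∀ c ∈ C, Polynomial.aeval (ω ^ t) ((X : ℚ[X]) ^ a c) = (χ c) ^ t := by
      intro c _
      rw [map_pow, aeval_X, ← pow_mul, mul_comm, pow_mul, ha2]
    rw [Finset.sum_congr rfl this]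
    exact hsum t ht
  set r : ℚ[X] := f %ₘ cyclotomic n ℚ with hrdef
  have hcyc : (cyclotomic n ℚ).Monic := cyclotomic.monic n ℚ
  have hreval : ∀ t : ℕ, Nat.Coprime t n →
      Polynomial.aeval (ω ^ t) r = ∑ c ∈ C, χ c := by
    intro t ht
    have hprim : IsPrimitiveRoot (ω ^ t) n := hω.pow_of_coprime t ht
    have hroot : Polynomial.aeval (ω ^ t) (cyclotomic n ℚ) = 0 := by
      rw [aeval_def, eval₂_eq_eval_map, map_cyclotomic]
      exact hprim.isRoot_cyclotomic hnpos
    rw [hrdef, modByMonic_eq_sub_mul_div f (cyclotomic n ℚ), map_sub, map_mul, hroot, zero_mul,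
      sub_zero]
    exact heval t ht
  set p : ℂ[X] := r.map (algebraMap ℚ ℂ) with hpdef
  set q : ℂ[X] := p - Polynomial.C (∑ c ∈ C, χ c) with hqdef
  set T : Finset ℕ := (Finset.range n).filter (fun i => Nat.Coprime i n) with hTdef
  have hcardT : T.card = Nat.totient n := by
    rw [hTdef, Nat.totient]
    congr 1
    apply Finset.filter_congr
    intro i _
    simp [Nat.coprime_comm]
  have hq0 : q = 0 := by
    apply Polynomial.eq_zero_of_natDegree_lt_card_of_eval_eq_zero q
      (f := fun i : {x // x ∈ T} => ω ^ (i : ℕ))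
    · intro i j hij
      have hi := Finset.mem_range.mp (Finset.mem_filter.mp i.2).1
      have hj := Finset.mem_range.mp (Finset.mem_filter.mp j.2).1
      exact Subtype.ext (hω.pow_inj hi hj hij)
    · intro i
      have hico := (Finset.mem_filter.mp i.2).2
      have : p.eval (ω ^ (i : ℕ)) = ∑ c ∈ C, χ c := by
        rw [hpdef, Polynomial.eval_map, ← aeval_def]
        exact hreval (i : ℕ) hico
      rw [hqdef, Polynomial.eval_sub, this, Polynomial.eval_C, sub_self]
    · rw [Fintype.card_coe, hcardT]
      have hdr : r.degree < (Nat.totient n : WithBot ℕ) := by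
        have := Polynomial.degree_modByMonic_lt f hcyc
        rwa [degree_cyclotomic] at this
      have hdp : p.degree < (Nat.totient n : WithBot ℕ) := by
        rw [hpdef, degree_map]
        exact hdr
      have htotpos : 0 < Nat.totient n := Nat.totient_pos.mpr hnpos
      have hdq : q.degree < (Nat.totient n : WithBot ℕ) := by
        rw [hqdef]
        apply lt_of_le_of_lt (Polynomial.degree_sub_le _ _)
        rw [max_lt_iff]
        refine ⟨hdp, ?_⟩
        apply lt_of_le_of_lt (Polynomial.degree_C_le)
        exact_mod_cast WithBot.coe_lt_coe.mpr htotpos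
      by_cases hqz : q = 0
      · rw [hqz]
        simpa using htotpos
      · exact (Polynomial.natDegree_lt_iff_degree_lt hqz).mpr hdq
  have hrat : (∑ c ∈ C, χ c) = algebraMap ℚ ℂ (r.coeff 0) := by
    have hpc : p = Polynomial.C (∑ c ∈ C, χ c) := by
      have h := hq0
      rw [hqdef, sub_eq_zero] at h
      exact h
    have h0 : p.coeff 0 = ∑ c ∈ C, χ c := by rw [hpc, Polynomial.coeff_C_zero]
    rw [← h0, hpdef, Polynomial.coeff_map]
  have hint : IsIntegral ℤ (∑ c ∈ C, χ c) := by
    apply IsIntegral.sum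
    intro c _
    exact ⟨X ^ n - Polynomial.C 1, monic_X_pow_sub_C 1 hn, by simp [hpow c]⟩
  have hint2 : IsIntegral ℤ (r.coeff 0) := by
    rw [hrat] at hint
    exact (isIntegral_algebraMap_iff (algebraMap ℚ ℂ).injective).mp hint
  obtain ⟨k, hk⟩ := IsIntegrallyClosed.isIntegral_iff.mp hint2
  refine ⟨k, ?_⟩
  rw [hrat, ← hk]
  simp

private lemma finset_eq_of_charSum_eq (C C' : Finset G)
    (h : ∀ χ : G →* ℂ, ∑ d ∈ C', χ d = ∑ d ∈ C, χ d) : C' = C := by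
  classical
  set b := charBasis G with hb
  set u : G → ℂ := fun g => (if g ∈ C then 1 else 0) - (if g ∈ C' then 1 else 0) with hu
  let Φ : (G → ℂ) →ₗ[ℂ] ℂ :=
    { toFun := fun w => ∑ g, u g * w g
      map_add' := fun w1 w2 => by
        simp [mul_add, Finset.sum_add_distrib]
      map_smul' := fun m w => by
        simp only [Pi.smul_apply, smul_eq_mul, RingHom.id_apply, Finset.mul_sum]
        exact Finset.sum_congr rfl fun g _ => by ring }
  have hΦb : ∀ χ : G →* ℂ, Φ (b χ) = (0 : ℂ) := by
    intro χ
    rw [hb, charBasis_apply]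
    show ∑ g, u g * χ g = 0
    have hcalc : ∑ g, u g * χ g = (∑ d ∈ C, χ d) - (∑ d ∈ C', χ d) := by
      rw [hu]
      simp only [sub_mul, ite_mul, one_mul, zero_mul]
      rw [Finset.sum_sub_distrib, Finset.sum_ite_mem, Finset.sum_ite_mem,
        Finset.univ_inter, Finset.univ_inter]
    rw [hcalc, h χ, sub_self]
  have hΦ : Φ = (0 : (G → ℂ) →ₗ[ℂ] ℂ) := b.ext fun χ => by simp [hΦb χ]
  have huz : ∀ g : G, u g = 0 := by
    intro g0
    have h1 : Φ (Pi.single g0 1) = u g0 := by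
      simp only [Φ, LinearMap.coe_mk, AddHom.coe_mk]
      rw [Finset.sum_eq_single g0]
      · rw [Pi.single_eq_same, mul_one]
      · intro g _ hg
        rw [Pi.single_eq_of_ne hg, mul_zero]
      · intro hg
        exact absurd (Finset.mem_univ g0) hg
    rw [hΦ] at h1
    simpa using h1.symm
  ext g
  have hg := huz g
  rw [hu, sub_eq_zero] at hg
  by_cases h1 : g ∈ C <;> by_cases h2 : g ∈ C' <;> simp [h1, h2] at hg ⊢

private lemma image_eq_of_charSum_int (C : Finset G)
    (hI : ∀ χ : G →* ℂ, ∃ k : ℤ, (∑ c ∈ C, χ c) = (k : ℂ))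
    {t : ℕ} (ht : Nat.Coprime t (Monoid.exponent G)) :
    C.image (· ^ t) = C := by
  classical
  set n := Monoid.exponent G with hndef
  have hn : n ≠ 0 := Monoid.exponent_ne_zero_of_finite
  haveI : NeZero n := ⟨hn⟩
  have hnpos : 0 < n := Nat.pos_of_ne_zero hn
  set ω : ℂ := Complex.exp (2 * Real.pi * Complex.I / n) with hωdef
  have hω : IsPrimitiveRoot ω n := Complex.isPrimitiveRoot_exp n hn
  have hωt : IsPrimitiveRoot (ω ^ t) n := hω.pow_of_coprime t ht
  have key : ∀ χ : G →* ℂ, ∑ c ∈ C, χ (c ^ t) = ∑ c ∈ C, χ c := by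
    intro χ
    obtain ⟨k, hk⟩ := hI χ
    have hpow : ∀ c : G, (χ c) ^ n = 1 := fun c => by
      rw [← map_pow, hndef, Monoid.pow_exponent_eq_one, map_one]
    choose a ha1 ha2 using fun c => hω.eq_pow_of_pow_eq_one (hpow c)
    set f : ℚ[X] := (∑ c ∈ C, X ^ (a c)) - Polynomial.C ((k : ℚ)) with hfdef
    have hfeval : ∀ z : ℂ, Polynomial.aeval z f = (∑ c ∈ C, z ^ a c) - (k : ℂ) := by
      intro z
      rw [hfdef, map_sub, map_sum]
      congr 1
      · exact Finset.sum_congr rfl fun c _ => by rw [map_pow, aeval_X]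
      · rw [aeval_C]
        simp
    have hfω : Polynomial.aeval ω f = 0 := by
      rw [hfeval]
      have : ∑ c ∈ C, ω ^ a c = ∑ c ∈ C, χ c :=
        Finset.sum_congr rfl fun c _ => ha2 c
      rw [this, hk, sub_self]
    have hmin : minpoly ℚ ω ∣ f := minpoly.dvd ℚ ω hfω
    have hcycmin : cyclotomic n ℚ = minpoly ℚ ω := cyclotomic_eq_minpoly_rat hω hnpos
    obtain ⟨u, hu⟩ : cyclotomic n ℚ ∣ f := hcycmin ▸ hmin
    have hft : Polynomial.aeval (ω ^ t) f = 0 := by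
      rw [hu, map_mul]
      have hz : Polynomial.aeval (ω ^ t) (cyclotomic n ℚ) = 0 := by
        rw [aeval_def, eval₂_eq_eval_map, map_cyclotomic]
        exact hωt.isRoot_cyclotomic hnpos
      rw [hz, zero_mul]
    rw [hfeval] at hft
    have hsum : ∑ c ∈ C, (ω ^ t) ^ a c = (k : ℂ) := by
      rwa [sub_eq_zero] at hft
    have hterm : ∀ c ∈ C, (ω ^ t) ^ a c = χ (c ^ t) := by
      intro c _
      rw [← pow_mul, mul_comm, pow_mul, ha2, ← map_pow]
    rw [← Finset.sum_congr rfl hterm, hsum, hk]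
  have key2 : ∀ χ : G →* ℂ, ∑ d ∈ C.image (· ^ t), χ d = ∑ d ∈ C, χ d := by
    intro χ
    rw [Finset.sum_image (fun x _ y _ hxy => pow_coprime_injective ht hxy)]
    exact key χ
  exact finset_eq_of_charSum_eq C (C.image (· ^ t)) key2

end Cay

/-- Bridges–Mena: for a finite abelian group `G` and any `C ⊆ G`, all eigenvalues of
`Cay(G, C)` are integers iff `C` is power-closed (equivalently, closed under `x ↦ x ^ t`
for all `t` coprime to the exponent of `G`). -/
theorem stmt12 {G : Type*} [CommGroup G] [Fintype G] [DecidableEq G] (C : Finset G) :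
    ((∀ μ ∈ spectrum ℂ (cayleyAdj C), ∃ k : ℤ, μ = (k : ℂ)) ↔ IsPowerClosed C) ∧
    (IsPowerClosed C ↔
      ∀ x ∈ C, ∀ t : ℤ, Int.gcd t (Monoid.exponent G) = 1 → x ^ t ∈ C) := by
  classical
  set n := Monoid.exponent G with hndef
  have hn : n ≠ 0 := Monoid.exponent_ne_zero_of_finite
  haveI : NeZero n := ⟨hn⟩
  -- the "P2" condition
  have hB : IsPowerClosed C ↔
      ∀ x ∈ C, ∀ t : ℤ, Int.gcd t (Monoid.exponent G) = 1 → x ^ t ∈ C := by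
    constructor
    · intro hPC x hx t htg
      have h1 : IsCoprime t ((Monoid.exponent G : ℕ) : ℤ) :=
        Int.isCoprime_iff_gcd_eq_one.mpr htg
      obtain ⟨u, v, huv⟩ := h1
      have hxn : x ^ ((Monoid.exponent G : ℕ) : ℤ) = 1 := by
        rw [zpow_natCast, Monoid.pow_exponent_eq_one]
      have hxinv : (x ^ t) ^ u = x := by
        rw [← zpow_mul]
        have h3 : x ^ (t * u) = x ^ (t * u) * (x ^ ((Monoid.exponent G : ℕ) : ℤ)) ^ v := by
          rw [hxn, one_zpow, mul_one]
        rw [h3, ← zpow_mul, ← zpow_add]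
        rw [show t * u + ((Monoid.exponent G : ℕ) : ℤ) * v = 1 by
          rw [mul_comm t u, mul_comm ((Monoid.exponent G : ℕ) : ℤ) v]; exact huv]
        exact zpow_one x
      apply hPC x hx (x ^ t) (Subgroup.mem_zpowers_iff.mpr ⟨t, rfl⟩)
      apply le_antisymm
      · exact Subgroup.zpowers_le.mpr (Subgroup.mem_zpowers_iff.mpr ⟨t, rfl⟩)
      · exact Subgroup.zpowers_le.mpr (Subgroup.mem_zpowers_iff.mpr ⟨u, hxinv⟩)
    · intro hP2 x hx y hy heq
      obtain ⟨k, hk⟩ := Subgroup.mem_zpowers_iff.mp hy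
      have hdpos : 0 < orderOf x := orderOf_pos x
      have hd : orderOf x ≠ 0 := hdpos.ne'
      have hxy : x ∈ Subgroup.zpowers y := heq ▸ Subgroup.mem_zpowers x
      obtain ⟨m, hm⟩ := Subgroup.mem_zpowers_iff.mp hxy
      have hgcd : Int.gcd k (orderOf x) = 1 := by
        have h1 : x ^ (k * m) = x := by rw [zpow_mul, hk, hm]
        have h2 : x ^ (k * m - 1) = 1 := by
          rw [zpow_sub, h1, zpow_one, mul_inv_cancel]
        have h3 : ((orderOf x : ℕ) : ℤ) ∣ k * m - 1 := orderOf_dvd_iff_zpow_eq_one.mpr h2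
        have h4 : ((Int.gcd k (orderOf x) : ℕ) : ℤ) ∣ 1 := by
          have d1 : ((Int.gcd k (orderOf x) : ℕ) : ℤ) ∣ k * m :=
            Dvd.dvd.mul_right (Int.gcd_dvd_left _ _) m
          have d2 : ((Int.gcd k (orderOf x) : ℕ) : ℤ) ∣ k * m - 1 :=
            dvd_trans (Int.gcd_dvd_right _ _) h3
          simpa using dvd_sub d1 d2
        exact Nat.dvd_one.mp (by exact_mod_cast h4)
      obtain ⟨k', hk'eq, hk'gcd⟩ := exists_nat_pow_eq x hd (pow_orderOf_eq_one x) k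
      have hk'co : Nat.Coprime k' (orderOf x) := by
        have : Int.gcd (k' : ℤ) ((orderOf x : ℕ) : ℤ) = 1 := hk'gcd.trans hgcd
        rwa [Int.gcd_natCast_natCast] at this
      have hdvd : orderOf x ∣ n := Monoid.order_dvd_exponent x
      obtain ⟨uu, huu⟩ := ZMod.unitsMap_surjective hdvd (ZMod.unitOfCoprime k' hk'co)
      set tn : ℕ := (uu : ZMod n).val with htn
      have htnco : Nat.Coprime tn n := ZMod.val_coe_unit_coprime uu
      have h6 : (ZMod.cast (uu : ZMod n) : ZMod (orderOf x)) = (k' : ZMod (orderOf x)) := by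
        have h5 := congrArg (fun w : (ZMod (orderOf x))ˣ => (w : ZMod (orderOf x))) huu
        simpa [ZMod.unitsMap_def, ZMod.coe_unitOfCoprime] using h5
      have hcong : (tn : ZMod (orderOf x)) = (k' : ZMod (orderOf x)) :=
        (ZMod.natCast_val (uu : ZMod n)).trans h6
      have hxk : x ^ tn = x ^ k' := by
        rw [pow_eq_pow_iff_modEq]
        exact (ZMod.natCast_eq_natCast_iff _ _ _).mp hcong
      have hmem : x ^ ((tn : ℕ) : ℤ) ∈ C := by
        apply hP2 x hx
        rw [Int.gcd_natCast_natCast]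
        exact htnco
      rw [zpow_natCast, hxk] at hmem
      have hy' : y = x ^ k' := by rw [← hk, hk'eq]
      rwa [← hy'] at hmem
  refine ⟨?_, hB⟩
  constructor
  · -- integrality → power-closed
    intro hspec
    rw [hB]
    intro x hx t htg
    have hI : ∀ χ : G →* ℂ, ∃ k : ℤ, (∑ c ∈ C, χ c) = (k : ℂ) := fun χ =>
      hspec _ (charSum_mem_spectrum C χ)
    obtain ⟨t', hpoweq, hgcd⟩ := exists_nat_pow_eq x hn (Monoid.pow_exponent_eq_one x) t
    have hco : Nat.Coprime t' n := by
      have h1 : Int.gcd (t' : ℤ) (n : ℤ) = 1 := hgcd.trans htg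
      rwa [Int.gcd_natCast_natCast] at h1
    rw [hpoweq]
    rw [← image_eq_of_charSum_int C hI hco]
    exact Finset.mem_image_of_mem _ hx
  · -- power-closed → integrality
    intro hPC μ hμ
    have hP2 := hB.mp hPC
    have himg : ∀ t : ℕ, Nat.Coprime t (Monoid.exponent G) → C.image (· ^ t) = C := by
      intro t ht
      apply Finset.eq_of_subset_of_card_le
      · intro y hy
        obtain ⟨z, hz, rfl⟩ := Finset.mem_image.mp hy
        have := hP2 z hz (t : ℤ) (by rw [Int.gcd_natCast_natCast]; exact ht)
        rwa [zpow_natCast] at this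
      · rw [Finset.card_image_of_injective C (pow_coprime_injective ht)]
    obtain ⟨χ, rfl⟩ := spectrum_sub C hμ
    exact charSum_int_of_image_eq C himg χ
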